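/- arXiv:2108.08812 — 7 statements merged into one kernel-verified Lean document; each statement's English description precedes it below -/
import Mathlib

section
/- Fix a state s. For any parameters θ, θ' ∈ ℝ^d with ‖θ − θ'‖₂ ≤ 1/2, the soft-max policies satisfy ∑_{a ∈ 𝒜} |π_{θ'}(a|s) − π_θ(a|s)| ≤ 8‖θ − θ'‖₂. -/
open scoped BigOperators

/-- The soft-max policy with parameter `θ` induced by the feature map `φ`:
`π_θ(a|s) = exp(⟨φ(s,a), θ⟩) / ∑_{a'} exp(⟨φ(s,a'), θ⟩)`. -/
noncomputable def softmaxPolicy {S A : Type*} [Fintype A] {d : ℕ}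
    (φ : S → A → EuclideanSpace ℝ (Fin d)) (θ : EuclideanSpace ℝ (Fin d))
    (s : S) (a : A) : ℝ :=
  Real.exp (inner ℝ (φ s a) θ : ℝ) / ∑ a' : A, Real.exp (inner ℝ (φ s a') θ : ℝ)

/-- Nearby soft-max policies: if `‖θ − θ'‖₂ ≤ 1/2`, then
`∑_a |π_{θ'}(a|s) − π_θ(a|s)| ≤ 8‖θ − θ'‖₂`. -/
theorem statement_0 {S A : Type*} [Fintype A] [Nonempty A] {d : ℕ}
    (φ : S → A → EuclideanSpace ℝ (Fin d))
    (hφ : ∀ s a, ‖φ s a‖ ≤ 1)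
    (s : S) (θ θ' : EuclideanSpace ℝ (Fin d))
    (h : ‖θ - θ'‖ ≤ 1 / 2) :
    ∑ a : A, |softmaxPolicy φ θ' s a - softmaxPolicy φ θ s a| ≤ 8 * ‖θ - θ'‖ := by
  set δ := ‖θ - θ'‖ with hδdef
  have hδ0 : 0 ≤ δ := norm_nonneg _
  have hZ : 0 < ∑ a' : A, Real.exp (inner ℝ (φ s a') θ : ℝ) :=
    Finset.sum_pos (fun a _ => Real.exp_pos _) Finset.univ_nonempty
  have hZ' : 0 < ∑ a' : A, Real.exp (inner ℝ (φ s a') θ' : ℝ) :=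
    Finset.sum_pos (fun a _ => Real.exp_pos _) Finset.univ_nonempty
  have hdiff : ∀ a : A, |(inner ℝ (φ s a) θ' : ℝ) - inner ℝ (φ s a) θ| ≤ δ := by
    intro a
    have h1 : (inner ℝ (φ s a) θ' : ℝ) - inner ℝ (φ s a) θ = inner ℝ (φ s a) (θ' - θ) := by
      rw [inner_sub_right]
    rw [h1]
    calc |(inner ℝ (φ s a) (θ' - θ) : ℝ)| ≤ ‖φ s a‖ * ‖θ' - θ‖ := abs_real_inner_le_norm _ _
      _ ≤ 1 * ‖θ' - θ‖ := by
          gcongr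
          exact hφ s a
      _ = δ := by rw [one_mul, norm_sub_rev]
  -- pointwise exponential bounds
  have hup : ∀ a : A, Real.exp (inner ℝ (φ s a) θ' : ℝ) ≤
      Real.exp δ * Real.exp (inner ℝ (φ s a) θ : ℝ) := by
    intro a
    rw [← Real.exp_add]
    apply Real.exp_le_exp.mpr
    have := (abs_le.mp (hdiff a)).2
    linarith
  have hlo : ∀ a : A, Real.exp (-δ) * Real.exp (inner ℝ (φ s a) θ : ℝ) ≤
      Real.exp (inner ℝ (φ s a) θ' : ℝ) := by
    intro a
    rw [← Real.exp_add]
    apply Real.exp_le_exp.mpr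
    have := (abs_le.mp (hdiff a)).1
    linarith
  -- bounds on the partition functions
  have hZup : (∑ a' : A, Real.exp (inner ℝ (φ s a') θ' : ℝ)) ≤
      Real.exp δ * ∑ a' : A, Real.exp (inner ℝ (φ s a') θ : ℝ) := by
    rw [Finset.mul_sum]
    exact Finset.sum_le_sum fun a _ => hup a
  have hZlo : Real.exp (-δ) * (∑ a' : A, Real.exp (inner ℝ (φ s a') θ : ℝ)) ≤
      ∑ a' : A, Real.exp (inner ℝ (φ s a') θ' : ℝ) := by
    rw [Finset.mul_sum]
    exact Finset.sum_le_sum fun a _ => hlo a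
  set E := Real.exp (2 * δ) with hE
  have hEpos : 0 < E := Real.exp_pos _
  have hEinv : Real.exp (-(2 * δ)) = E⁻¹ := Real.exp_neg _
  -- pointwise policy sandwich
  have hπup : ∀ a : A, softmaxPolicy φ θ' s a ≤ E * softmaxPolicy φ θ s a := by
    intro a
    unfold softmaxPolicy
    have key : Real.exp (inner ℝ (φ s a) θ' : ℝ) /
        (∑ a' : A, Real.exp (inner ℝ (φ s a') θ' : ℝ)) ≤
        (Real.exp δ * Real.exp (inner ℝ (φ s a) θ : ℝ)) /
        (Real.exp (-δ) * ∑ a' : A, Real.exp (inner ℝ (φ s a') θ : ℝ)) := by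
      apply div_le_div₀ (by positivity) (hup a) (by positivity) (hZlo)
    refine key.trans (le_of_eq ?_)
    have h2e : Real.exp (2 * δ) = Real.exp δ * Real.exp δ := by
      rw [← Real.exp_add]; ring_nf
    rw [hE, h2e, Real.exp_neg]
    have hne : (Real.exp δ) ≠ 0 := (Real.exp_pos δ).ne'
    field_simp
  have hπlo : ∀ a : A, E⁻¹ * softmaxPolicy φ θ s a ≤ softmaxPolicy φ θ' s a := by
    intro a
    unfold softmaxPolicy
    have key : (Real.exp (-δ) * Real.exp (inner ℝ (φ s a) θ : ℝ)) /
        (Real.exp δ * ∑ a' : A, Real.exp (inner ℝ (φ s a') θ : ℝ)) ≤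
        Real.exp (inner ℝ (φ s a) θ' : ℝ) /
        (∑ a' : A, Real.exp (inner ℝ (φ s a') θ' : ℝ)) := by
      apply div_le_div₀ (le_of_lt (Real.exp_pos _)) (hlo a) hZ' hZup
    refine le_trans (le_of_eq ?_) key
    rw [← hEinv]
    have h2e : Real.exp (-(2 * δ)) = Real.exp (-δ) * Real.exp (-δ) := by
      rw [← Real.exp_add]; ring_nf
    rw [h2e, Real.exp_neg]
    have hne : (Real.exp δ) ≠ 0 := (Real.exp_pos δ).ne'
    field_simp
  have hπnn : ∀ a : A, 0 ≤ softmaxPolicy φ θ s a := by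
    intro a
    unfold softmaxPolicy
    positivity
  -- per-term bound
  have hterm : ∀ a : A, |softmaxPolicy φ θ' s a - softmaxPolicy φ θ s a| ≤
      (E - 1) * softmaxPolicy φ θ s a := by
    intro a
    have h1 := hπup a
    have h2 := hπlo a
    have h3 := hπnn a
    have hEinv_le : 1 - E⁻¹ ≤ E - 1 := by
      have hEE : E * E⁻¹ = 1 := mul_inv_cancel₀ (ne_of_gt hEpos)
      nlinarith [sq_nonneg (E - 1), hEpos]
    rw [abs_le]
    constructor
    · have : (1 - E⁻¹) * softmaxPolicy φ θ s a ≤ (E - 1) * softmaxPolicy φ θ s a :=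
        mul_le_mul_of_nonneg_right hEinv_le h3
      nlinarith
    · nlinarith
  have hsum1 : ∑ a : A, softmaxPolicy φ θ s a = 1 := by
    unfold softmaxPolicy
    rw [← Finset.sum_div, div_self (ne_of_gt hZ)]
  calc ∑ a : A, |softmaxPolicy φ θ' s a - softmaxPolicy φ θ s a|
      ≤ ∑ a : A, (E - 1) * softmaxPolicy φ θ s a := Finset.sum_le_sum fun a _ => hterm a
    _ = E - 1 := by rw [← Finset.mul_sum, hsum1, mul_one]
    _ ≤ 8 * δ := by
        have h1 : 1 + (-(2 * δ)) ≤ Real.exp (-(2 * δ)) := by linarith [Real.add_one_le_exp (-(2 * δ))]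
        have h2 : E ≤ Real.exp 1 := Real.exp_le_exp.mpr (by linarith)
        have h3 : Real.exp 1 < 2.7182818286 := Real.exp_one_lt_d9
        have hEE : E * E⁻¹ = 1 := mul_inv_cancel₀ (ne_of_gt hEpos)
        rw [hEinv] at h1
        nlinarith [hEpos]
end

section
/- For any parameters θ, θ' ∈ ℝ^d, any state s and any action a, the ratio of soft-max policies is bounded as π_{θ'}(a|s) ≤ e^{2‖θ − θ'‖₂} · π_θ(a|s). Consequently, if in addition ‖θ − θ'‖₂ ≤ 1/2, then π_{θ'}(a|s) − π_θ(a|s) ≤ 4 π_θ(a|s) ‖θ − θ'‖₂. -/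
open scoped BigOperators

lemma exp_two_mul_le (x : ℝ) (h0 : 0 ≤ x) (h1 : x ≤ 1 / 2) :
    Real.exp (2 * x) ≤ 1 + 4 * x := by
  have h := convexOn_exp.2 (Set.mem_univ (0 : ℝ)) (Set.mem_univ (1 : ℝ))
    (show (0:ℝ) ≤ 1 - 2 * x by linarith) (show (0:ℝ) ≤ 2 * x by linarith)
    (show (1 - 2 * x) + 2 * x = 1 by ring)
  simp only [smul_eq_mul, mul_zero, mul_one, zero_add, Real.exp_zero] at h
  have he : Real.exp 1 ≤ 3 := by
    have := Real.exp_one_lt_d9; linarith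
  nlinarith

/-- The ratio of soft-max policies is bounded as
`π_{θ'}(a|s) ≤ e^{2‖θ − θ'‖} · π_θ(a|s)`; consequently if `‖θ − θ'‖ ≤ 1/2` then
`π_{θ'}(a|s) − π_θ(a|s) ≤ 4 π_θ(a|s) ‖θ − θ'‖`. -/
theorem statement_1 {S A : Type*} [Fintype A] [Nonempty A] {d : ℕ}
    (φ : S → A → EuclideanSpace ℝ (Fin d))
    (hφ : ∀ s a, ‖φ s a‖ ≤ 1)
    (s : S) (a : A) (θ θ' : EuclideanSpace ℝ (Fin d)) :
    softmaxPolicy φ θ' s a ≤ Real.exp (2 * ‖θ - θ'‖) * softmaxPolicy φ θ s a ∧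
    (‖θ - θ'‖ ≤ 1 / 2 →
      softmaxPolicy φ θ' s a - softmaxPolicy φ θ s a
        ≤ 4 * softmaxPolicy φ θ s a * ‖θ - θ'‖) := by
  set x := ‖θ - θ'‖ with hx
  have hx0 : 0 ≤ x := norm_nonneg _
  -- pointwise bounds
  have key : ∀ (b : A) (t t' : EuclideanSpace ℝ (Fin d)),
      Real.exp (inner ℝ (φ s b) t : ℝ) ≤ Real.exp ‖t - t'‖ * Real.exp (inner ℝ (φ s b) t' : ℝ) := by
    intro b t t'
    rw [← Real.exp_add]
    apply Real.exp_le_exp.2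
    have h1 : (inner ℝ (φ s b) t : ℝ) - (inner ℝ (φ s b) t' : ℝ) = inner ℝ (φ s b) (t - t') :=
      (inner_sub_right _ _ _).symm
    have h2 : (inner ℝ (φ s b) (t - t') : ℝ) ≤ ‖φ s b‖ * ‖t - t'‖ := real_inner_le_norm _ _
    have h3 : ‖φ s b‖ * ‖t - t'‖ ≤ 1 * ‖t - t'‖ :=
      mul_le_mul_of_nonneg_right (hφ s b) (norm_nonneg _)
    nlinarith
  have hxsymm : ‖θ' - θ‖ = x := by rw [hx, norm_sub_rev]
  have hnum : Real.exp (inner ℝ (φ s a) θ' : ℝ) ≤ Real.exp x * Real.exp (inner ℝ (φ s a) θ : ℝ) := by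
    have := key a θ' θ; rwa [hxsymm] at this
  have hden : (∑ a' : A, Real.exp (inner ℝ (φ s a') θ : ℝ))
      ≤ Real.exp x * ∑ a' : A, Real.exp (inner ℝ (φ s a') θ' : ℝ) := by
    rw [Finset.mul_sum]
    exact Finset.sum_le_sum fun b _ => key b θ θ'
  have hSpos : ∀ t : EuclideanSpace ℝ (Fin d),
      0 < ∑ a' : A, Real.exp (inner ℝ (φ s a') t : ℝ) :=
    fun t => Finset.sum_pos (fun b _ => Real.exp_pos _) Finset.univ_nonempty
  have hπpos : 0 < softmaxPolicy φ θ s a :=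
    div_pos (Real.exp_pos _) (hSpos θ)
  have hmain : softmaxPolicy φ θ' s a ≤ Real.exp (2 * x) * softmaxPolicy φ θ s a := by
    unfold softmaxPolicy
    rw [← mul_div_assoc, div_le_div_iff₀ (hSpos θ') (hSpos θ)]
    calc Real.exp (inner ℝ (φ s a) θ' : ℝ) * ∑ a' : A, Real.exp (inner ℝ (φ s a') θ : ℝ)
        ≤ (Real.exp x * Real.exp (inner ℝ (φ s a) θ : ℝ)) *
          (Real.exp x * ∑ a' : A, Real.exp (inner ℝ (φ s a') θ' : ℝ)) :=
          mul_le_mul hnum hden (le_of_lt (hSpos θ)) (by positivity)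
      _ = Real.exp (2 * x) * Real.exp (inner ℝ (φ s a) θ : ℝ) *
          ∑ a' : A, Real.exp (inner ℝ (φ s a') θ' : ℝ) := by
          rw [two_mul, Real.exp_add]; ring
  refine ⟨hmain, fun hhalf => ?_⟩
  have hexp := exp_two_mul_le x hx0 hhalf
  nlinarith [hmain, hπpos]
end

section
/- Let Q(s,a) = ⟨φ(s,a), w⟩ for some w ∈ ℝ^d, let η > 0, let θ⁺ = θ + η w, and let F : 𝒮 → ℝ be an arbitrary function. Then for every state-action pair (s,a): Q(s,a) − F(s) = (1/η)·[ log( π_{θ⁺}(a|s) / π_θ(a|s) ) + log( ∑_{a' ∈ 𝒜} π_θ(a'|s) · e^{η (Q(s,a') − F(s))} ) ]. -/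
open scoped BigOperators

/-- For the linear `Q(s,a) = ⟨φ(s,a), w⟩`, the update `θ⁺ = θ + η w`, and any baseline
function `F : 𝒮 → ℝ`,
`Q(s,a) − F(s) = (1/η)[log(π_{θ⁺}(a|s)/π_θ(a|s)) + log(∑_{a'} π_θ(a'|s) e^{η(Q(s,a') − F(s))})]`. -/
theorem statement_2 {S A : Type*} [Fintype A] [Nonempty A] {d : ℕ}
    (φ : S → A → EuclideanSpace ℝ (Fin d))
    (hφ : ∀ s a, ‖φ s a‖ ≤ 1)
    (w θ : EuclideanSpace ℝ (Fin d)) (η : ℝ) (hη : 0 < η)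
    (Q : S → A → ℝ) (hQ : ∀ s a, Q s a = (inner ℝ (φ s a) w : ℝ))
    (F : S → ℝ) (s : S) (a : A) :
    Q s a - F s
      = (1 / η) * (Real.log (softmaxPolicy φ (θ + η • w) s a / softmaxPolicy φ θ s a)
          + Real.log (∑ a' : A, softmaxPolicy φ θ s a' * Real.exp (η * (Q s a' - F s)))) := by
  set Z : ℝ := ∑ a' : A, Real.exp (inner ℝ (φ s a') θ : ℝ) with hZ
  set Zp : ℝ := ∑ a' : A, Real.exp (inner ℝ (φ s a') (θ + η • w) : ℝ) with hZp
  have hZpos : 0 < Z := Finset.sum_pos (fun i _ => Real.exp_pos _) Finset.univ_nonempty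
  have hZppos : 0 < Zp := Finset.sum_pos (fun i _ => Real.exp_pos _) Finset.univ_nonempty
  have hinner : ∀ a' : A, (inner ℝ (φ s a') (θ + η • w) : ℝ)
      = (inner ℝ (φ s a') θ : ℝ) + η * Q s a' := by
    intro a'
    rw [inner_add_right, real_inner_smul_right, hQ]
  -- the second sum
  have hsum : (∑ a' : A, softmaxPolicy φ θ s a' * Real.exp (η * (Q s a' - F s)))
      = Real.exp (-(η * F s)) * Zp / Z := by
    rw [eq_div_iff hZpos.ne', Finset.sum_mul, hZp, Finset.mul_sum]
    refine Finset.sum_congr rfl fun a' _ => ?_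
    rw [softmaxPolicy, hinner a', div_mul_eq_mul_div, div_mul_eq_mul_div,
      mul_div_assoc, ← hZ, div_self hZpos.ne', mul_one, ← Real.exp_add, ← Real.exp_add]
    congr 1
    ring
  have hratio : softmaxPolicy φ (θ + η • w) s a / softmaxPolicy φ θ s a
      = Real.exp (η * Q s a) * Z / Zp := by
    rw [softmaxPolicy, softmaxPolicy, ← hZ, ← hZp, hinner a, Real.exp_add]
    rw [div_div_div_comm]
    field_simp
  have hA : 0 < softmaxPolicy φ (θ + η • w) s a / softmaxPolicy φ θ s a := by
    rw [hratio]; positivity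
  have hB : 0 < Real.exp (-(η * F s)) * Zp / Z := by positivity
  rw [hsum, ← Real.log_mul hA.ne' hB.ne', hratio]
  have : Real.exp (η * Q s a) * Z / Zp * (Real.exp (-(η * F s)) * Zp / Z)
      = Real.exp (η * (Q s a - F s)) := by
    rw [mul_sub, Real.exp_sub, Real.exp_neg]
    field_simp
  rw [this, Real.log_exp]
  field_simp
end

section
/- For any R > 0 and any ε ∈ (0,1), there exists a finite set Θ of vectors in the closed Euclidean ball of radius R in ℝ^d, with cardinality at most (1 + 16R/ε)^d (equivalently, log|Θ| ≤ d·log(1 + 16R/ε)), such that for every θ with ‖θ‖₂ ≤ R there is some θ' ∈ Θ with sup_{s ∈ 𝒮} ∑_{a ∈ 𝒜} |π_θ(a|s) − π_{θ'}(a|s)| ≤ ε. -/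
open scoped BigOperators

open Metric MeasureTheory
open scoped ENNReal


/-- Volume packing bound: an `r`-separated finite subset of the closed ball of radius `R`
in `ℝ^d` has cardinality at most `(1 + 2R/r)^d`. -/
lemma sep_card_le {d : ℕ} {R r : ℝ} (hR : 0 < R) (hr : 0 < r)
    (T : Finset (EuclideanSpace ℝ (Fin d)))
    (hTB : ∀ t ∈ T, ‖t‖ ≤ R)
    (hsep : ∀ t ∈ T, ∀ t' ∈ T, t ≠ t' → r ≤ dist t t') :
    (T.card : ℝ) ≤ (1 + 2 * R / r) ^ d := by
  set μ : Measure (EuclideanSpace ℝ (Fin d)) := volume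
  have hdisj : (T : Set (EuclideanSpace ℝ (Fin d))).PairwiseDisjoint
      (fun t => ball t (r / 2)) := by
    intro t ht t' ht' hne
    apply ball_disjoint_ball
    rw [add_halves]
    exact hsep t ht t' ht' hne
  have hsub : (⋃ t ∈ T, ball t (r / 2)) ⊆ closedBall (0 : EuclideanSpace ℝ (Fin d)) (R + r / 2) := by
    intro x hx
    simp only [Set.mem_iUnion] at hx
    obtain ⟨t, ht, hxt⟩ := hx
    rw [mem_closedBall, dist_zero_right]
    calc ‖x‖ ≤ ‖t‖ + ‖x - t‖ := norm_le_norm_add_norm_sub' x t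
    _ ≤ R + r / 2 := by
        refine add_le_add (hTB t ht) ?_
        rw [← dist_eq_norm]
        exact (mem_ball.1 hxt).le
  have hsum : ∑ t ∈ T, μ (ball t (r / 2)) ≤ μ (closedBall (0 : EuclideanSpace ℝ (Fin d)) (R + r / 2)) := by
    rw [← measure_biUnion_finset hdisj (fun t _ => measurableSet_ball)]
    exact measure_mono hsub
  have hballvol : ∀ t : EuclideanSpace ℝ (Fin d),
      μ (ball t (r / 2)) = ENNReal.ofReal ((r / 2) ^ d) * μ (ball 0 1) := by
    intro t
    rw [Measure.addHaar_ball_of_pos μ t (by positivity)]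
    simp [finrank_euclideanSpace_fin]
  have hcbvol : μ (closedBall (0 : EuclideanSpace ℝ (Fin d)) (R + r / 2))
      = ENNReal.ofReal ((R + r / 2) ^ d) * μ (ball 0 1) := by
    rw [Measure.addHaar_closedBall' μ _ (by positivity),
      Measure.addHaar_unitClosedBall_eq_addHaar_unitBall]
    simp [finrank_euclideanSpace_fin]
  have hpos : 0 < μ (ball (0 : EuclideanSpace ℝ (Fin d)) 1) := measure_ball_pos μ _ one_pos
  have hfin : μ (ball (0 : EuclideanSpace ℝ (Fin d)) 1) < ⊤ := measure_ball_lt_top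
  simp only [hballvol, Finset.sum_const, nsmul_eq_mul, hcbvol] at hsum
  have hcard : (T.card : ENNReal) * ENNReal.ofReal ((r / 2) ^ d) ≤ ENNReal.ofReal ((R + r / 2) ^ d) :=
    (ENNReal.mul_le_mul_iff_left (ne_of_gt hpos) (ne_of_lt hfin)).1
      (by rw [mul_assoc]; exact hsum)
  -- convert to real
  have h2 : (T.card : ℝ) * (r / 2) ^ d ≤ (R + r / 2) ^ d := by
    have := ENNReal.toReal_mono (by simp) hcard
    rw [ENNReal.toReal_mul, ENNReal.toReal_ofReal (by positivity),
      ENNReal.toReal_ofReal (by positivity)] at this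
    simpa using this
  have hrd : (0:ℝ) < (r / 2) ^ d := by positivity
  rw [← le_div_iff₀ hrd] at h2
  refine h2.trans_eq ?_
  rw [← div_pow]
  congr 1
  field_simp
  ring


/-- Existence of an `r`-net of the ball of radius `R` with at most `(1+2R/r)^d` points. -/
lemma exists_net {d : ℕ} {R r : ℝ} (hR : 0 < R) (hr : 0 < r) :
    ∃ T : Finset (EuclideanSpace ℝ (Fin d)),
      (∀ t ∈ T, ‖t‖ ≤ R) ∧ (T.card : ℝ) ≤ (1 + 2 * R / r) ^ d ∧
      ∀ x : EuclideanSpace ℝ (Fin d), ‖x‖ ≤ R → ∃ t ∈ T, dist x t < r := by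
  classical
  set P : Finset (EuclideanSpace ℝ (Fin d)) → Prop := fun T =>
    (∀ t ∈ T, ‖t‖ ≤ R) ∧ ∀ t ∈ T, ∀ t' ∈ T, t ≠ t' → r ≤ dist t t' with hP
  set s : Set ℕ := {n | ∃ T, P T ∧ T.card = n} with hs
  have hne : s.Nonempty := ⟨0, ∅, ⟨by simp, by simp⟩, rfl⟩
  have hbdd : BddAbove s := by
    refine ⟨Nat.ceil ((1 + 2 * R / r) ^ d), ?_⟩
    rintro n ⟨T, ⟨h1, h2⟩, rfl⟩
    have h3 := sep_card_le hR hr T h1 h2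
    have h4 := h3.trans (Nat.le_ceil _)
    exact_mod_cast h4
  obtain ⟨T, ⟨hTB, hTsep⟩, hTcard⟩ := Nat.sSup_mem hne hbdd
  refine ⟨T, hTB, (sep_card_le hR hr T hTB hTsep), ?_⟩
  intro x hx
  by_contra hcon
  push_neg at hcon
  have hxT : x ∉ T := fun h => absurd (hcon x h) (by simp [hr])
  have hP' : P (insert x T) := by
    constructor
    · intro t ht
      rcases Finset.mem_insert.1 ht with h | h
      · exact h ▸ hx
      · exact hTB t h
    · intro t ht t' ht' hne'
      rcases Finset.mem_insert.1 ht with h | h <;>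
        rcases Finset.mem_insert.1 ht' with h' | h'
      · exact absurd (h.trans h'.symm) hne'
      · exact h ▸ hcon t' h'
      · rw [dist_comm]; exact h' ▸ hcon t h
      · exact hTsep t h t' h' hne'
  have : T.card + 1 ∈ s := ⟨insert x T, hP', by rw [Finset.card_insert_of_notMem hxT]⟩
  have := le_csSup hbdd this
  omega

lemma softmax_lip {S A : Type*} [Fintype A] [Nonempty A] {d : ℕ}
    (φ : S → A → EuclideanSpace ℝ (Fin d)) (hφ : ∀ s a, ‖φ s a‖ ≤ 1)
    (θ θ' : EuclideanSpace ℝ (Fin d)) (s : S) :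
    ∑ a : A, |softmaxPolicy φ θ s a - softmaxPolicy φ θ' s a|
      ≤ 2 * (Real.exp (2 * ‖θ - θ'‖) - 1) := by
  set δ := ‖θ - θ'‖ with hδ
  have hδ0 : 0 ≤ δ := norm_nonneg _
  set z : A → ℝ := fun a => (inner ℝ (φ s a) θ : ℝ) with hz
  set z' : A → ℝ := fun a => (inner ℝ (φ s a) θ' : ℝ) with hz'
  have hzz' : ∀ a, |z a - z' a| ≤ δ := by
    intro a
    have : z a - z' a = (inner ℝ (φ s a) (θ - θ') : ℝ) := by
      simp [hz, hz', inner_sub_right]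
    rw [this]
    calc |(inner ℝ (φ s a) (θ - θ') : ℝ)| ≤ ‖φ s a‖ * ‖θ - θ'‖ := abs_real_inner_le_norm _ _
    _ ≤ 1 * δ := by
        exact mul_le_mul_of_nonneg_right (hφ s a) (norm_nonneg _)
    _ = δ := one_mul δ
  -- pointwise exponential bounds
  have hexp : ∀ a, Real.exp (z' a) ≤ Real.exp δ * Real.exp (z a) ∧
      Real.exp (z a) ≤ Real.exp δ * Real.exp (z' a) := by
    intro a
    have h := abs_le.1 (hzz' a)
    constructor
    · rw [← Real.exp_add]; exact Real.exp_le_exp.2 (by linarith)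
    · rw [← Real.exp_add]; exact Real.exp_le_exp.2 (by linarith)
  set D : ℝ := ∑ a : A, Real.exp (z a) with hD
  set D' : ℝ := ∑ a : A, Real.exp (z' a) with hD'
  have hDpos : 0 < D := Finset.sum_pos (fun a _ => Real.exp_pos _) Finset.univ_nonempty
  have hD'pos : 0 < D' := Finset.sum_pos (fun a _ => Real.exp_pos _) Finset.univ_nonempty
  have hDD' : D ≤ Real.exp δ * D' := by
    rw [hD, hD', Finset.mul_sum]
    exact Finset.sum_le_sum (fun a _ => (hexp a).2)
  have hD'D : D' ≤ Real.exp δ * D := by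
    rw [hD, hD', Finset.mul_sum]
    exact Finset.sum_le_sum (fun a _ => (hexp a).1)
  have heδ : (1:ℝ) ≤ Real.exp δ := Real.one_le_exp hδ0
  have hup : ∀ a : A, Real.exp (z' a) / D' ≤ Real.exp (2*δ) * Real.exp (z a) / D := by
    intro a
    rw [div_le_div_iff₀ hD'pos hDpos]
    calc Real.exp (z' a) * D ≤ (Real.exp δ * Real.exp (z a)) * (Real.exp δ * D') :=
          mul_le_mul (hexp a).1 hDD' hDpos.le (by positivity)
    _ = Real.exp (2*δ) * Real.exp (z a) * D' := by
        rw [two_mul, Real.exp_add]; ring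
  have hdown : ∀ a : A, Real.exp (z a) / D ≤ Real.exp (2*δ) * Real.exp (z' a) / D' := by
    intro a
    rw [div_le_div_iff₀ hDpos hD'pos]
    calc Real.exp (z a) * D' ≤ (Real.exp δ * Real.exp (z' a)) * (Real.exp δ * D) :=
          mul_le_mul (hexp a).2 hD'D hD'pos.le (by positivity)
    _ = Real.exp (2*δ) * Real.exp (z' a) * D := by
        rw [two_mul, Real.exp_add]; ring
  have he2δ : (1:ℝ) ≤ Real.exp (2*δ) := Real.one_le_exp (by linarith)
  have key : ∀ a : A, |softmaxPolicy φ θ s a - softmaxPolicy φ θ' s a|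
      ≤ (Real.exp (2*δ) - 1) * (softmaxPolicy φ θ s a + softmaxPolicy φ θ' s a) := by
    intro a
    have hπ : softmaxPolicy φ θ s a = Real.exp (z a) / D := rfl
    have hπ' : softmaxPolicy φ θ' s a = Real.exp (z' a) / D' := rfl
    have hπpos : 0 < Real.exp (z a) / D := by positivity
    have hπ'pos : 0 < Real.exp (z' a) / D' := by positivity
    have h1 := hup a
    have h2 := hdown a
    rw [hπ, hπ', abs_sub_le_iff]
    rw [mul_div_assoc] at h1 h2
    constructor <;> nlinarith [h1, h2, hπpos, hπ'pos, he2δ]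
  have hsum1 : ∑ a : A, softmaxPolicy φ θ s a = 1 := by
    unfold softmaxPolicy
    rw [← Finset.sum_div]
    exact div_self (ne_of_gt hDpos)
  have hsum1' : ∑ a : A, softmaxPolicy φ θ' s a = 1 := by
    unfold softmaxPolicy
    rw [← Finset.sum_div]
    exact div_self (ne_of_gt hD'pos)
  calc ∑ a : A, |softmaxPolicy φ θ s a - softmaxPolicy φ θ' s a|
      ≤ ∑ a : A, (Real.exp (2*δ) - 1) * (softmaxPolicy φ θ s a + softmaxPolicy φ θ' s a) :=
        Finset.sum_le_sum (fun a _ => key a)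
  _ = (Real.exp (2*δ) - 1) * ((∑ a : A, softmaxPolicy φ θ s a) + ∑ a : A, softmaxPolicy φ θ' s a) := by
        simp only [mul_add, Finset.sum_add_distrib, Finset.mul_sum]
  _ = 2 * (Real.exp (2*‖θ - θ'‖) - 1) := by rw [hsum1, hsum1', hδ]; ring

/-- Covering of the soft-max policy class of radius `R` in the `‖·‖_{∞,1}` metric:
for any `ε ∈ (0,1)` there is an `ε`-cover of cardinality at most `(1 + 16R/ε)^d`. -/
theorem statement_5 {S A : Type*} [Fintype A] [Nonempty A] {d : ℕ}
    (φ : S → A → EuclideanSpace ℝ (Fin d))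
    (hφ : ∀ s a, ‖φ s a‖ ≤ 1)
    (R ε : ℝ) (hR : 0 < R) (hε : ε ∈ Set.Ioo (0 : ℝ) 1) :
    ∃ Θ : Finset (EuclideanSpace ℝ (Fin d)),
      (∀ θ' ∈ Θ, ‖θ'‖ ≤ R) ∧
      (Θ.card : ℝ) ≤ (1 + 16 * R / ε) ^ d ∧
      ∀ θ : EuclideanSpace ℝ (Fin d), ‖θ‖ ≤ R →
        ∃ θ' ∈ Θ, ∀ s : S,
          ∑ a : A, |softmaxPolicy φ θ s a - softmaxPolicy φ θ' s a| ≤ ε := by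
  obtain ⟨hε0, hε1⟩ := hε
  have hr : (0:ℝ) < ε / 8 := by linarith
  obtain ⟨T, hTB, hTcard, hTnet⟩ := exists_net (d := d) hR hr
  refine ⟨T, hTB, ?_, ?_⟩
  · refine hTcard.trans_eq ?_
    congr 2
    field_simp; ring
  · intro θ hθ
    obtain ⟨θ', hθ'T, hdist⟩ := hTnet θ hθ
    refine ⟨θ', hθ'T, fun s => ?_⟩
    have hlip := softmax_lip φ hφ θ θ' s
    have hnrm : ‖θ - θ'‖ ≤ ε / 8 := by
      rw [← dist_eq_norm]; exact hdist.le
    have hmono : Real.exp (2 * ‖θ - θ'‖) ≤ Real.exp (ε / 4) :=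
      Real.exp_le_exp.2 (by linarith)
    have hnum : 2 * (Real.exp (ε / 4) - 1) ≤ ε := by
      set x : ℝ := ε / 4 with hx
      have hx0 : 0 < x := by positivity
      have hx1 : x ≤ 1 / 4 := by rw [hx]; linarith
      have h1 : -x + 1 ≤ Real.exp (-x) := Real.add_one_le_exp (-x)
      have h2 : Real.exp (-x) * Real.exp x = 1 := by
        rw [← Real.exp_add]; simp
      have h3 : 0 < Real.exp x := Real.exp_pos x
      nlinarith [h1, h2, h3]
    linarith
end

section
/- Let φ_1, …, φ_N ∈ ℝ^d, let λ > 0, and set Σ = ∑_{k=1}^N φ_k φ_kᵀ + λ·I. If Δ_1, …, Δ_N ∈ ℝ satisfy |Δ_k| ≤ ε for all k, then ‖∑_{k=1}^N φ_k Δ_k‖_{Σ^{-1}} ≤ √N · ε. -/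
open scoped BigOperators
open Matrix

private lemma vmv_mulVec {d : ℕ} (u x : Fin d → ℝ) :
    Matrix.vecMulVec u u *ᵥ x = (u ⬝ᵥ x) • u := by
  ext i
  simp only [Matrix.mulVec, Matrix.vecMulVec_apply, dotProduct, Pi.smul_apply,
    smul_eq_mul, Finset.sum_mul]
  exact Finset.sum_congr rfl fun j _ => by ring

private lemma dotProduct_sum' {d : ℕ} {ι : Type*} (s : Finset ι) (x : Fin d → ℝ)
    (f : ι → Fin d → ℝ) : x ⬝ᵥ (∑ k ∈ s, f k) = ∑ k ∈ s, x ⬝ᵥ f k := by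
  simp only [dotProduct, Finset.sum_apply, Finset.mul_sum]
  exact Finset.sum_comm

private lemma sum_dotProduct' {d : ℕ} {ι : Type*} (s : Finset ι) (x : Fin d → ℝ)
    (f : ι → Fin d → ℝ) : (∑ k ∈ s, f k) ⬝ᵥ x = ∑ k ∈ s, f k ⬝ᵥ x := by
  simp only [dotProduct, Finset.sum_apply, Finset.sum_mul]
  exact Finset.sum_comm

private lemma sum_mulVec' {d : ℕ} {ι : Type*} (s : Finset ι)
    (M : ι → Matrix (Fin d) (Fin d) ℝ) (x : Fin d → ℝ) :
    (∑ k ∈ s, M k) *ᵥ x = ∑ k ∈ s, M k *ᵥ x := by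
  ext i
  simp only [Matrix.mulVec, dotProduct, Finset.sum_apply, Matrix.sum_apply,
    Finset.sum_mul]
  exact Finset.sum_comm

private lemma dp_self_nonneg {d : ℕ} (x : Fin d → ℝ) : 0 ≤ x ⬝ᵥ x :=
  Finset.sum_nonneg fun i _ => mul_self_nonneg (x i)

/-- Projection bound: with `Σ = ∑_k φ_k φ_kᵀ + λI` (`λ > 0`) and `|Δ_k| ≤ ε`,
`‖∑_k φ_k Δ_k‖_{Σ⁻¹} ≤ √N ε`. -/
theorem statement_7 {d N : ℕ} (φ : Fin N → Fin d → ℝ) (lam : ℝ) (hlam : 0 < lam)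
    (Δ : Fin N → ℝ) (ε : ℝ) (hΔ : ∀ k, |Δ k| ≤ ε) :
    Real.sqrt ((∑ k, Δ k • φ k) ⬝ᵥ
        (((∑ k, Matrix.vecMulVec (φ k) (φ k))
            + lam • (1 : Matrix (Fin d) (Fin d) ℝ))⁻¹ *ᵥ (∑ k, Δ k • φ k)))
      ≤ Real.sqrt N * ε := by
  rcases Nat.eq_zero_or_pos N with hN | hN
  · subst hN
    simp
  have hε : 0 ≤ ε := le_trans (abs_nonneg _) (hΔ ⟨0, hN⟩)
  set S : Matrix (Fin d) (Fin d) ℝ := ∑ k, Matrix.vecMulVec (φ k) (φ k) with hSdef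
  set A : Matrix (Fin d) (Fin d) ℝ := S + lam • 1 with hAdef
  set v : Fin d → ℝ := ∑ k, Δ k • φ k with hvdef
  -- quadratic form of S
  have hq : ∀ x : Fin d → ℝ, x ⬝ᵥ (S *ᵥ x) = ∑ k, (φ k ⬝ᵥ x) ^ 2 := by
    intro x
    rw [hSdef, sum_mulVec', dotProduct_sum']
    refine Finset.sum_congr rfl fun k _ => ?_
    rw [vmv_mulVec, dotProduct_smul, smul_eq_mul, dotProduct_comm]
    ring
  have hSherm : S.IsHermitian := by
    refine Matrix.IsHermitian.ext fun i j => ?_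
    simp [hSdef, Matrix.conjTranspose_apply, Matrix.vecMulVec_apply, Matrix.sum_apply,
      mul_comm]
  have hS : S.PosSemidef := by
    refine Matrix.PosSemidef.of_dotProduct_mulVec_nonneg hSherm fun x => ?_
    rw [star_trivial, hq]
    positivity
  have hI : (lam • (1 : Matrix (Fin d) (Fin d) ℝ)).PosDef := by
    refine Matrix.PosDef.of_dotProduct_mulVec_pos ?_ ?_
    · refine Matrix.IsHermitian.ext fun i j => ?_
      simp [Matrix.conjTranspose_apply, Matrix.one_apply, eq_comm]
    · intro x hx
      rw [star_trivial, Matrix.smul_mulVec, Matrix.one_mulVec,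
        dotProduct_smul, smul_eq_mul]
      have hxx : 0 < x ⬝ᵥ x := by
        rcases lt_or_eq_of_le (dp_self_nonneg x) with h | h
        · exact h
        · exact absurd ((dotProduct_self_eq_zero).mp h.symm) hx
      positivity
  have hA : A.PosDef := Matrix.PosDef.posSemidef_add hS hI
  set w : Fin d → ℝ := A⁻¹ *ᵥ v with hwdef
  set t : ℝ := v ⬝ᵥ w with htdef
  have ht0 : 0 ≤ t := by
    have := hA.inv.posSemidef.dotProduct_mulVec_nonneg v
    rwa [star_trivial] at this
  have hAw : A *ᵥ w = v := by
    rw [hwdef, Matrix.mulVec_mulVec,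
      Matrix.mul_nonsing_inv _ ((Matrix.isUnit_iff_isUnit_det _).mp hA.isUnit),
      Matrix.one_mulVec]
  set a : Fin N → ℝ := fun k => φ k ⬝ᵥ w with hadef
  have ht2 : t = (∑ k, a k ^ 2) + lam * (w ⬝ᵥ w) := by
    rw [htdef, dotProduct_comm, ← hAw, hAdef, Matrix.add_mulVec,
      dotProduct_add, hq, Matrix.smul_mulVec, Matrix.one_mulVec,
      dotProduct_smul, smul_eq_mul]
  have ht1 : t = ∑ k, Δ k * a k := by
    rw [htdef, hvdef, sum_dotProduct']
    refine Finset.sum_congr rfl fun k _ => ?_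
    rw [smul_dotProduct, smul_eq_mul, hadef]
  have hsq : ∑ k, a k ^ 2 ≤ t := by
    have : 0 ≤ lam * (w ⬝ᵥ w) := mul_nonneg hlam.le (dp_self_nonneg w)
    linarith [ht2]
  -- Cauchy–Schwarz style bound
  have habs : (∑ k, |a k|) ^ 2 ≤ N * t := by
    calc (∑ k, |a k|) ^ 2 ≤ (Finset.univ.card : ℝ) * ∑ k, |a k| ^ 2 :=
          sq_sum_le_card_mul_sum_sq
      _ = N * ∑ k, a k ^ 2 := by simp [sq_abs]
      _ ≤ N * t := by
          exact mul_le_mul_of_nonneg_left hsq (Nat.cast_nonneg N)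
  have habs' : ∑ k, |a k| ≤ Real.sqrt N * Real.sqrt t := by
    rw [← Real.sqrt_mul (Nat.cast_nonneg N)]
    rw [show (∑ k, |a k|) = Real.sqrt ((∑ k, |a k|) ^ 2) by
      rw [Real.sqrt_sq (Finset.sum_nonneg fun k _ => abs_nonneg _)]]
    exact Real.sqrt_le_sqrt habs
  have hkey : t ≤ ε * (Real.sqrt N * Real.sqrt t) := by
    calc t = ∑ k, Δ k * a k := ht1
      _ ≤ ∑ k, ε * |a k| := by
          refine Finset.sum_le_sum fun k _ => ?_
          calc Δ k * a k ≤ |Δ k * a k| := le_abs_self _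
            _ = |Δ k| * |a k| := abs_mul _ _
            _ ≤ ε * |a k| := mul_le_mul_of_nonneg_right (hΔ k) (abs_nonneg _)
      _ = ε * ∑ k, |a k| := by rw [Finset.mul_sum]
      _ ≤ ε * (Real.sqrt N * Real.sqrt t) := mul_le_mul_of_nonneg_left habs' hε
  have hst : Real.sqrt t * Real.sqrt t = t := Real.mul_self_sqrt ht0
  rcases eq_or_lt_of_le (Real.sqrt_nonneg t) with h0 | h0
  · rw [← h0]
    positivity
  · have : Real.sqrt t * Real.sqrt t ≤ (Real.sqrt N * ε) * Real.sqrt t := by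
      rw [hst]; nlinarith [hkey]
    exact le_of_mul_le_mul_right this h0
end

section
/- Let d be a positive integer, n a positive real, λ > 0, and set γ = 1/√(2d) and c = 1/√2. Define D = (γ²·n/d + λ)·I_d, v ∈ ℝ^d with every entry equal to γ·c·n/d, and b = c²·(n + n/d) + λ. Then the Schur complement is bounded below as b − vᵀ D^{-1} v > c²·n/d + λ > 0, and consequently its inverse satisfies (b − vᵀ D^{-1} v)^{-1} < d/(c²·n + d·λ) < d/(c²·n). -/
open scoped BigOperators
open Matrix

/-- Bounds on the Schur complement of the arrowhead covariance matrix in the lower-bound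
construction: with `γ = 1/√(2d)`, `c = 1/√2`, `D = (γ²n/d + λ)I`, `v ≡ γcn/d` and
`b = c²(n + n/d) + λ`, we have `b − vᵀD⁻¹v > c²n/d + λ > 0` and
`(b − vᵀD⁻¹v)⁻¹ < d/(c²n + dλ) < d/(c²n)`. -/
theorem statement_13 (d : ℕ) (hd : 0 < d) (n lam : ℝ) (hn : 0 < n) (hlam : 0 < lam) :
    let γ : ℝ := 1 / Real.sqrt (2 * d)
    let c : ℝ := 1 / Real.sqrt 2
    let D : Matrix (Fin d) (Fin d) ℝ := (γ ^ 2 * n / d + lam) • 1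
    let v : Fin d → ℝ := fun _ => γ * c * n / d
    let b : ℝ := c ^ 2 * (n + n / d) + lam
    (c ^ 2 * n / d + lam < b - v ⬝ᵥ (D⁻¹ *ᵥ v) ∧ 0 < c ^ 2 * n / d + lam) ∧
      ((b - v ⬝ᵥ (D⁻¹ *ᵥ v))⁻¹ < d / (c ^ 2 * n + d * lam)
        ∧ d / (c ^ 2 * n + d * lam) < d / (c ^ 2 * n)) := by
  intro γ c D v b
  have hdR : (0:ℝ) < d := Nat.cast_pos.mpr hd
  have hγ2 : γ ^ 2 = 1 / (2 * d) := by
    simp only [γ, div_pow, one_pow, Real.sq_sqrt (by positivity : (0:ℝ) ≤ 2 * d)]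
  have hc2 : c ^ 2 = 1 / 2 := by
    simp only [c, div_pow, one_pow, Real.sq_sqrt (by norm_num : (0:ℝ) ≤ 2)]
  set α : ℝ := γ ^ 2 * n / d + lam with hα
  have hαpos : 0 < α := by rw [hα, hγ2]; positivity
  have hDinv : D⁻¹ = α⁻¹ • (1 : Matrix (Fin d) (Fin d) ℝ) := by
    apply Matrix.inv_eq_right_inv
    rw [Matrix.smul_mul, Matrix.mul_smul, Matrix.one_mul, smul_smul,
      mul_inv_cancel₀ hαpos.ne', one_smul]
  have hq : v ⬝ᵥ (D⁻¹ *ᵥ v) = α⁻¹ * (d * (γ * c * n / d) ^ 2) := by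
    rw [hDinv, Matrix.smul_mulVec, Matrix.one_mulVec, dotProduct_smul]
    simp [dotProduct, v, Finset.sum_const, sq, mul_comm, mul_assoc, mul_left_comm]
  rw [hq]
  have key : α⁻¹ * (d * (γ * c * n / d) ^ 2) < n / 2 := by
    rw [inv_mul_lt_iff₀ hαpos, div_pow, mul_pow, mul_pow, hγ2, hc2, hα, hγ2]
    have expand : (1/(2*(d:ℝ))*n/↑d + lam)*(n/2)
        = ↑d*(1/(2*↑d)*(1/2)*n^2/↑d^2) + lam*n/2 := by
      field_simp
    rw [expand]
    have : 0 < lam * n / 2 := by positivity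
    linarith
  have hb : b = 1/2 * (n + n / d) + lam := by
    rw [show b = c^2*(n+n/d)+lam from rfl, hc2]
  obtain ⟨q, hq', hqlt⟩ : ∃ q : ℝ, α⁻¹ * (↑d * (γ * c * n / ↑d) ^ 2) = q ∧ q < n/2 :=
    ⟨_, rfl, key⟩
  rw [hq']
  have hS : 1/2 * n / d + lam < b - q := by
    rw [hb]
    have : 1/2 * (n + n / ↑d) = n/2 + 1/2 * n / ↑d := by ring
    linarith
  have hgoal1 : c ^ 2 * n / d + lam < b - q := by rw [hc2]; exact hS
  have hpos1 : (0:ℝ) < 1/2 * n / d + lam := by positivity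
  refine ⟨⟨hgoal1, by rw [hc2]; exact hpos1⟩, ?_, ?_⟩
  · have heq : (1/2 * n + ↑d * lam)/↑d = 1/2 * n / d + lam := by field_simp
    have h2 : (1/2 * n + ↑d * lam)/↑d < b - q := by rw [heq]; exact hS
    have h3 : (b - q)⁻¹ < ((1/2 * n + ↑d * lam)/↑d)⁻¹ := by
      apply inv_strictAnti₀ _ h2
      rw [heq]; exact hpos1
    rw [inv_div] at h3
    rw [hc2]; exact h3
  · rw [hc2]
    apply div_lt_div_of_pos_left hdR (by positivity)
    nlinarith [mul_pos hdR hlam]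
end

section
/- Fix a state s and parameters θ, θ' ∈ ℝ^d with ‖θ − θ'‖₂ ≤ 1/2. Then for every action a ∈ 𝒜, |π_{θ'}(a|s) − π_θ(a|s)| ≤ 4‖θ − θ'‖₂ · max{ π_θ(a|s), π_{θ'}(a|s) }. -/
open scoped BigOperators

lemma aux_ratio (ε p q : ℝ) (hε : 0 ≤ ε) (hp : 0 ≤ p) (hq : 0 ≤ q)
    (h1 : q ≤ Real.exp (2*ε) * p) (h2 : p ≤ Real.exp (2*ε) * q) :
    |q - p| ≤ 4 * ε * max p q := by
  have hE : Real.exp (-(2*ε)) * Real.exp (2*ε) = 1 := by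
    rw [← Real.exp_add]; simp
  have hEl : 1 - 2*ε ≤ Real.exp (-(2*ε)) := by
    have := Real.add_one_le_exp (-(2*ε)); linarith
  have hEp := (Real.exp_pos (-(2*ε))).le
  rcases le_total p q with hpq | hpq
  · rw [abs_of_nonneg (by linarith), max_eq_right hpq]
    have hm := mul_le_mul_of_nonneg_left h1 hEp
    nlinarith
  · rw [abs_of_nonpos (by linarith), max_eq_left hpq]
    have hm := mul_le_mul_of_nonneg_left h2 hEp
    nlinarith

/-- If `‖θ − θ'‖₂ ≤ 1/2`, then for every action `a`,
`|π_{θ'}(a|s) − π_θ(a|s)| ≤ 4‖θ − θ'‖₂ · max{π_θ(a|s), π_{θ'}(a|s)}`. -/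
theorem statement_15 {S A : Type*} [Fintype A] [Nonempty A] {d : ℕ}
    (φ : S → A → EuclideanSpace ℝ (Fin d))
    (hφ : ∀ s a, ‖φ s a‖ ≤ 1)
    (s : S) (θ θ' : EuclideanSpace ℝ (Fin d))
    (h : ‖θ - θ'‖ ≤ 1 / 2) (a : A) :
    |softmaxPolicy φ θ' s a - softmaxPolicy φ θ s a|
      ≤ 4 * ‖θ - θ'‖ * max (softmaxPolicy φ θ s a) (softmaxPolicy φ θ' s a) := by
  set ε := ‖θ - θ'‖ with hεdef
  have hε0 : 0 ≤ ε := norm_nonneg _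
  -- inner products are within ε of each other
  have hib : ∀ b : A, |(inner ℝ (φ s b) θ' : ℝ) - (inner ℝ (φ s b) θ : ℝ)| ≤ ε := by
    intro b
    have heq : (inner ℝ (φ s b) θ' : ℝ) - (inner ℝ (φ s b) θ : ℝ)
        = (inner ℝ (φ s b) (θ' - θ) : ℝ) := by rw [inner_sub_right]
    rw [heq]
    calc |(inner ℝ (φ s b) (θ' - θ) : ℝ)| ≤ ‖φ s b‖ * ‖θ' - θ‖ :=
          abs_real_inner_le_norm _ _
      _ ≤ 1 * ‖θ' - θ‖ := by
          exact mul_le_mul_of_nonneg_right (hφ s b) (norm_nonneg _)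
      _ = ε := by rw [one_mul, norm_sub_rev]
  -- pointwise exponential comparisons
  have hexp1 : ∀ b : A, Real.exp (inner ℝ (φ s b) θ' : ℝ)
      ≤ Real.exp ε * Real.exp (inner ℝ (φ s b) θ : ℝ) := by
    intro b
    rw [← Real.exp_add]
    exact Real.exp_le_exp.2 (by have := (abs_le.1 (hib b)).2; linarith)
  have hexp2 : ∀ b : A, Real.exp (inner ℝ (φ s b) θ : ℝ)
      ≤ Real.exp ε * Real.exp (inner ℝ (φ s b) θ' : ℝ) := by
    intro b
    rw [← Real.exp_add]
    exact Real.exp_le_exp.2 (by have := (abs_le.1 (hib b)).1; linarith)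
  set Su := ∑ a' : A, Real.exp (inner ℝ (φ s a') θ : ℝ) with hSu
  set Sv := ∑ a' : A, Real.exp (inner ℝ (φ s a') θ' : ℝ) with hSv
  have hSup : 0 < Su := Finset.sum_pos (fun b _ => Real.exp_pos _) Finset.univ_nonempty
  have hSvp : 0 < Sv := Finset.sum_pos (fun b _ => Real.exp_pos _) Finset.univ_nonempty
  have hS1 : Sv ≤ Real.exp ε * Su := by
    rw [hSv, hSu, Finset.mul_sum]
    exact Finset.sum_le_sum fun b _ => hexp1 b
  have hS2 : Su ≤ Real.exp ε * Sv := by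
    rw [hSu, hSv, Finset.mul_sum]
    exact Finset.sum_le_sum fun b _ => hexp2 b
  set p := softmaxPolicy φ θ s a with hpdef
  set q := softmaxPolicy φ θ' s a with hqdef
  have hp0 : 0 ≤ p := div_nonneg (Real.exp_pos _).le hSup.le
  have hq0 : 0 ≤ q := div_nonneg (Real.exp_pos _).le hSvp.le
  have hee : Real.exp ε * Real.exp ε = Real.exp (2*ε) := by
    rw [← Real.exp_add]; ring_nf
  have h1 : q ≤ Real.exp (2*ε) * p := by
    rw [hqdef, hpdef, softmaxPolicy, softmaxPolicy, ← hSu, ← hSv]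
    rw [div_le_iff₀ hSvp]
    calc Real.exp (inner ℝ (φ s a) θ' : ℝ)
        ≤ Real.exp ε * Real.exp (inner ℝ (φ s a) θ : ℝ) := hexp1 a
      _ = Real.exp ε * (Real.exp (inner ℝ (φ s a) θ : ℝ) / Su) * Su := by
          field_simp
      _ ≤ Real.exp ε * (Real.exp (inner ℝ (φ s a) θ : ℝ) / Su) * (Real.exp ε * Sv) := by
          apply mul_le_mul_of_nonneg_left hS2
          positivity
      _ = Real.exp (2*ε) * (Real.exp (inner ℝ (φ s a) θ : ℝ) / Su) * Sv := by
          rw [← hee]; ring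
  have h2 : p ≤ Real.exp (2*ε) * q := by
    rw [hqdef, hpdef, softmaxPolicy, softmaxPolicy, ← hSu, ← hSv]
    rw [div_le_iff₀ hSup]
    calc Real.exp (inner ℝ (φ s a) θ : ℝ)
        ≤ Real.exp ε * Real.exp (inner ℝ (φ s a) θ' : ℝ) := hexp2 a
      _ = Real.exp ε * (Real.exp (inner ℝ (φ s a) θ' : ℝ) / Sv) * Sv := by
          field_simp
      _ ≤ Real.exp ε * (Real.exp (inner ℝ (φ s a) θ' : ℝ) / Sv) * (Real.exp ε * Su) := by
          apply mul_le_mul_of_nonneg_left hS1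
          positivity
      _ = Real.exp (2*ε) * (Real.exp (inner ℝ (φ s a) θ' : ℝ) / Sv) * Su := by
          rw [← hee]; ring
  exact aux_ratio ε p q hε0 hp0 hq0 h1 h2
end
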